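/- With R̄ = ℂ[e_0, e_1, e_2, …] and the ideal J̄ as defined, the residue classes of the monomials e_λ = e_{λ_1} ⋯ e_{λ_n}, where λ ranges over all (k,r,n)-admissible partitions over all n ≥ 0 (including the empty partition, giving the class of 1), span the quotient R̄/J̄ as a ℂ-vector space. -/

import Mathlib

open MvPolynomial

/-- The ideal `J̄ ⊆ R̄ = ℂ[e_0,e_1,…]` generated by the Fourier coefficients of
`e(ζ)e(τ^{p_2}ζ)⋯e(τ^{p_{k+1}}ζ)`, i.e. by the elements
`∑_{i_1+⋯+i_{k+1}=d} τ^{p_2 i_2 + ⋯ + p_{k+1} i_{k+1}} e_{i_1}⋯e_{i_{k+1}}`.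
The variable `e_i` is `MvPolynomial.X i`. -/
noncomputable def JbarIdeal (k : ℕ) (τ : ℂ) : Ideal (MvPolynomial ℕ ℂ) :=
  Ideal.span {g : MvPolynomial ℕ ℂ | ∃ (d : ℕ) (p : Fin k → ℤ),
    g = ∑ i ∈ Finset.Nat.antidiagonalTuple (k + 1) d,
      MvPolynomial.C (τ ^ (∑ c : Fin k, p c * ((i c.succ : ℕ) : ℤ))) *
        ∏ c : Fin (k + 1), MvPolynomial.X (i c)}

open Finset


open Finset

lemma map_univ_perm {n : ℕ} {β : Type*} (f : Fin n → β) (e : Equiv.Perm (Fin n)) :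
    Multiset.map (f ∘ e) Finset.univ.val = Multiset.map f Finset.univ.val := by
  have h1 : Multiset.map (f ∘ e) Finset.univ.val
      = Multiset.map f (Multiset.map e Finset.univ.val) := by
    rw [Multiset.map_map]
  have h2 : Multiset.map (⇑e) Finset.univ.val = Finset.univ.val := by
    have := Finset.map_univ_equiv e
    have : (Finset.univ.map e.toEmbedding).val = Finset.univ.val := by rw [this]
    simpa [Finset.map_val] using this
  rw [h1, h2]

lemma sum_comp_of_map_eq {n m : ℕ} {β γ : Type*} [AddCommMonoid γ] {f : Fin n → β}
    {g : Fin m → β} (h : Multiset.map f Finset.univ.val = Multiset.map g Finset.univ.val)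
    (F : β → γ) : ∑ c, F (f c) = ∑ c, F (g c) := by
  have : (Multiset.map (F ∘ f) Finset.univ.val).sum = (Multiset.map (F ∘ g) Finset.univ.val).sum := by
    rw [← Multiset.map_map, ← Multiset.map_map, h]
  simpa [Finset.sum] using this

lemma core_sq (q : ℤ) (hq : 1 ≤ q) {n : ℕ} :
    ∀ (N : ℕ) (a b : Fin n → ℤ),
    (∑ c, (b c - a c).natAbs) ≤ N →
    (∀ c, q ∣ (b c - a c)) → (∑ c, a c = ∑ c, b c) →
    (∀ c c', a c ≤ a c' + q) →
    Multiset.map a Finset.univ.val ≠ Multiset.map b Finset.univ.val →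
    ∑ c, (a c)^2 < ∑ c, (b c)^2 := by
  intro N
  induction N with
  | zero =>
    intro a b hN _ _ _ hne
    exfalso
    apply hne
    have : ∀ c, b c = a c := by
      intro c
      have : (b c - a c).natAbs = 0 := by
        have := Finset.sum_eq_zero_iff.mp (Nat.le_zero.mp hN) c (mem_univ c)
        exact this
      omega
    have : a = b := by funext c; exact (this c).symm
    rw [this]
  | succ N ih =>
    intro a b hN hdvd hsum hwidth hne
    -- b ≠ a somewhere
    have hex : ∃ c, b c ≠ a c := by
      by_contra h
      push_neg at h
      exact hne (by rw [show a = b from funext fun c => (h c).symm])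
    have hzero : ∑ c, (b c - a c) = 0 := by
      rw [Finset.sum_sub_distrib]; omega
    have hpos : ∃ cp, 0 < b cp - a cp := by
      by_contra h
      push_neg at h
      obtain ⟨c0, hc0⟩ := hex
      have h1 : ∀ c ∈ univ, b c - a c ≤ 0 := fun c _ => h c
      have := (Finset.sum_eq_zero_iff_of_nonpos h1).mp hzero c0 (mem_univ c0)
      exact hc0 (by omega)
    have hneg : ∃ cn, b cn - a cn < 0 := by
      by_contra h
      push_neg at h
      obtain ⟨c0, hc0⟩ := hex
      have h1 : ∀ c ∈ univ, 0 ≤ b c - a c := fun c _ => h c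
      have := (Finset.sum_eq_zero_iff_of_nonneg h1).mp hzero c0 (mem_univ c0)
      exact hc0 (by omega)
    obtain ⟨cp, hcp⟩ := hpos
    obtain ⟨cn, hcn⟩ := hneg
    have hpn : cp ≠ cn := by
      intro h; rw [h] at hcp; omega
    have hqp : q ≤ b cp - a cp := Int.le_of_dvd hcp (hdvd cp)
    have hqn : q ≤ a cn - b cn := by
      have hd : q ∣ (a cn - b cn) := by
        have := (hdvd cn).neg_right
        simpa [neg_sub] using this
      exact Int.le_of_dvd (by omega) hd
    have hwpn : a cn ≤ a cp + q := hwidth cn cp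
    have hbig : q ≤ b cp - b cn := by omega
    -- define b'
    set b' : Fin n → ℤ := fun c => if c = cp then b cp - q else if c = cn then b cn + q else b c with hb'def
    have hb'p : b' cp = b cp - q := by simp [hb'def]
    have hb'n : b' cn = b cn + q := by simp [hb'def, hpn.symm, if_neg hpn]
    have hb'o : ∀ c, c ≠ cp → c ≠ cn → b' c = b c := by
      intro c h1 h2; simp [hb'def, h1, h2]
    -- sums
    have hsum' : ∑ c, a c = ∑ c, b' c := by
      rw [hsum]
      have : ∑ c, b' c = ∑ c, (b c + ((if c = cp then -q else 0) + (if c = cn then q else 0))) := by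
        apply Finset.sum_congr rfl
        intro c _
        by_cases h1 : c = cp
        · subst h1; simp [hb'p, if_neg hpn]; ring
        · by_cases h2 : c = cn
          · subst h2; simp [hb'n, h1]
          · simp [hb'o c h1 h2, h1, h2]
      rw [this, Finset.sum_add_distrib, Finset.sum_add_distrib,
        Finset.sum_ite_eq' univ cp, Finset.sum_ite_eq' univ cn]
      simp
    have hdvd' : ∀ c, q ∣ (b' c - a c) := by
      intro c
      by_cases h1 : c = cp
      · rw [h1, hb'p]
        have h3 : b cp - q - a cp = (b cp - a cp) - q := by ring
        rw [h3]
        exact dvd_sub (hdvd cp) dvd_rfl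
      · by_cases h2 : c = cn
        · rw [h2, hb'n]
          have h3 : b cn + q - a cn = (b cn - a cn) + q := by ring
          rw [h3]
          exact dvd_add (hdvd cn) dvd_rfl
        · rw [hb'o c h1 h2]; exact hdvd c
    have hmeas : ∑ c, (b' c - a c).natAbs < ∑ c, (b c - a c).natAbs := by
      apply Finset.sum_lt_sum
      · intro c _
        by_cases h1 : c = cp
        · subst h1; rw [hb'p]; omega
        · by_cases h2 : c = cn
          · subst h2; rw [hb'n]; omega
          · rw [hb'o c h1 h2]
      · exact ⟨cp, mem_univ cp, by rw [hb'p]; omega⟩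
    have hsq : ∑ c, (b' c)^2 = ∑ c, (b c)^2 - 2*q*(b cp - b cn - q) := by
      have : ∑ c, (b' c)^2 = ∑ c, ((b c)^2 + ((if c = cp then (b cp - q)^2 - (b cp)^2 else 0)
          + (if c = cn then (b cn + q)^2 - (b cn)^2 else 0))) := by
        apply Finset.sum_congr rfl
        intro c _
        by_cases h1 : c = cp
        · subst h1; rw [hb'p]; simp [if_neg hpn]
        · by_cases h2 : c = cn
          · subst h2; rw [hb'n]; simp [h1]
          · simp [hb'o c h1 h2, h1, h2]
      rw [this, Finset.sum_add_distrib, Finset.sum_add_distrib,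
        Finset.sum_ite_eq' univ cp, Finset.sum_ite_eq' univ cn]
      simp; ring
    by_cases hb'ne : Multiset.map a Finset.univ.val = Multiset.map b' Finset.univ.val
    · -- equality case: show b cp - b cn > q, else multiset b = multiset a
      have hstrict : q < b cp - b cn := by
        rcases lt_or_eq_of_le hbig with h | h
        · exact h
        · exfalso
          have e1 : b cp = a cp + q := by omega
          have e2 : b cn = a cn - q := by omega
          have e3 : a cn = a cp + q := by omega
          -- b = b' ∘ swap cp cn
          have hswap : b = b' ∘ Equiv.swap cp cn := by
            funext c
            by_cases h1 : c = cp
            · subst h1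
              simp [Equiv.swap_apply_left, hb'n]
              omega
            · by_cases h2 : c = cn
              · subst h2
                simp [Equiv.swap_apply_right, hb'p]
                omega
              · simp [Equiv.swap_apply_of_ne_of_ne h1 h2, hb'o c h1 h2]
          apply hne
          rw [hswap, map_univ_perm, ← hb'ne]
      have heqsq : ∑ c, (a c)^2 = ∑ c, (b' c)^2 :=
        sum_comp_of_map_eq hb'ne (fun x => x^2)
      rw [heqsq, hsq]
      have : 0 < 2*q*(b cp - b cn - q) := by
        apply mul_pos (by omega) (by omega)
      omega
    · have := ih a b' (by omega) hdvd' hsum' hwidth hb'ne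
      have h2 : ∑ c, (b' c)^2 ≤ ∑ c, (b c)^2 := by
        rw [hsq]
        have : 0 ≤ 2*q*(b cp - b cn - q) := mul_nonneg (by omega) (by omega)
        omega
      omega

open MvPolynomial Finset

lemma zpow_sum' {α : Type*} (x : ℂ) (hx : x ≠ 0) (s : Finset α) (f : α → ℤ) :
    x ^ (∑ a ∈ s, f a) = ∏ a ∈ s, x ^ f a := by
  classical
  induction s using Finset.induction with
  | empty => simp
  | insert _ _ h ih => rw [Finset.sum_insert h, Finset.prod_insert h, zpow_add₀ hx, ih]

lemma orth {r : ℕ} {τ : ℂ} (hr : 2 ≤ r) (hτ : IsPrimitiveRoot τ (r-1)) (δ : ℤ) :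
    ∑ p ∈ Finset.range (r-1), (τ ^ δ)^p = if ((r-1 : ℕ):ℤ) ∣ δ then ((r-1 : ℕ):ℂ) else 0 := by
  by_cases h : ((r-1:ℕ):ℤ) ∣ δ
  · rw [if_pos h, (hτ.zpow_eq_one_iff_dvd δ).mpr h]
    simp
  · rw [if_neg h]
    have hne : τ ^ δ ≠ 1 := fun hcon => h ((hτ.zpow_eq_one_iff_dvd δ).mp hcon)
    rw [geom_sum_eq hne]
    have h1 : (τ ^ δ) ^ (r-1) = 1 := by
      rw [← zpow_natCast, ← zpow_mul, mul_comm, zpow_mul, zpow_natCast, hτ.pow_eq_one, one_zpow]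
    rw [h1]; simp

lemma avg_mem (k r : ℕ) (τ : ℂ) (hr : 2 ≤ r)
    (hτ : IsPrimitiveRoot τ (r-1)) (d : ℕ) (m : Fin k → ℕ) :
    (∑ i ∈ (Finset.Nat.antidiagonalTuple (k+1) d).filter
        (fun i => ∀ c : Fin k, ((r-1:ℕ):ℤ) ∣ ((i c.succ : ℤ) - (m c : ℤ))),
      ∏ c : Fin (k+1), X (i c)) ∈ JbarIdeal k τ := by
  classical
  have hq : 1 ≤ r - 1 := by omega
  have hτ0 : τ ≠ 0 := by
    intro h
    have h2 := hτ.pow_eq_one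
    rw [h, zero_pow (by omega)] at h2
    exact zero_ne_one h2
  set q := r - 1 with hqdef
  set A := Finset.Nat.antidiagonalTuple (k+1) d with hA
  set mono : (Fin (k+1) → ℕ) → MvPolynomial ℕ ℂ := fun i => ∏ c : Fin (k+1), X (i c) with hmono
  set P := Fintype.piFinset (fun _ : Fin k => Finset.range q) with hP
  set T := ∑ p ∈ P,
      C (τ ^ (-(∑ c : Fin k, ((m c : ℤ) * ((p c : ℕ) : ℤ))))) *
        ∑ i ∈ A, C (τ ^ (∑ c : Fin k, ((p c : ℕ):ℤ) * ((i c.succ : ℕ) : ℤ))) * mono i with hT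
  have hTJ : T ∈ JbarIdeal k τ := by
    apply Ideal.sum_mem
    intro p _
    apply Ideal.mul_mem_left
    exact Ideal.subset_span ⟨d, (fun c => ((p c : ℕ):ℤ)), rfl⟩
  have hTeq : T = C (((q:ℕ):ℂ)^k) *
      ∑ i ∈ A.filter (fun i => ∀ c : Fin k, ((q:ℕ):ℤ) ∣ ((i c.succ : ℤ) - (m c : ℤ))), mono i := by
    have step1 : T = ∑ i ∈ A, (∑ p ∈ P, τ ^ (∑ c : Fin k, (((i c.succ : ℕ):ℤ) - (m c:ℤ)) * ((p c : ℕ):ℤ))) • mono i := by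
      have e0 : T = ∑ p ∈ P, ∑ i ∈ A,
          (τ ^ (∑ c : Fin k, (((i c.succ : ℕ):ℤ) - (m c:ℤ)) * ((p c : ℕ):ℤ))) • mono i := by
        rw [hT]
        apply Finset.sum_congr rfl
        intro p _
        rw [Finset.mul_sum]
        apply Finset.sum_congr rfl
        intro i _
        rw [← mul_assoc, ← C_mul, ← zpow_add₀ hτ0, MvPolynomial.smul_eq_C_mul]
        congr 2
        have e1 : ∑ c : Fin k, (((i c.succ : ℕ):ℤ) - (m c:ℤ)) * ((p c : ℕ):ℤ)
            = ∑ c : Fin k, ((p c : ℕ):ℤ) * ((i c.succ : ℕ):ℤ) - ∑ c : Fin k, ((m c:ℤ) * ((p c : ℕ):ℤ)) := by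
          rw [← Finset.sum_sub_distrib]
          apply Finset.sum_congr rfl
          intro c _
          ring
        rw [e1]
        ring
      rw [e0, Finset.sum_comm]
      apply Finset.sum_congr rfl
      intro i _
      rw [← Finset.sum_smul]
    have step2 : ∀ i : Fin (k+1) → ℕ,
        (∑ p ∈ P, τ ^ (∑ c : Fin k, (((i c.succ : ℕ):ℤ) - (m c:ℤ)) * ((p c : ℕ):ℤ)))
        = if (∀ c : Fin k, ((q:ℕ):ℤ) ∣ ((i c.succ : ℤ) - (m c : ℤ))) then (((q:ℕ):ℂ))^k else 0 := by
      intro i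
      have e1 : ∀ p : Fin k → ℕ, τ ^ (∑ c : Fin k, (((i c.succ : ℕ):ℤ) - (m c:ℤ)) * ((p c : ℕ):ℤ))
          = ∏ c : Fin k, (τ ^ (((i c.succ : ℕ):ℤ) - (m c:ℤ))) ^ (p c) := by
        intro p
        rw [zpow_sum' τ hτ0]
        apply Finset.prod_congr rfl
        intro c _
        rw [zpow_mul, zpow_natCast]
      rw [Finset.sum_congr rfl (fun p _ => e1 p)]
      rw [← Finset.prod_univ_sum]
      have e2 : ∀ c : Fin k, (∑ j ∈ Finset.range q, (τ ^ (((i c.succ : ℕ):ℤ) - (m c:ℤ))) ^ j)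
          = if ((q:ℕ):ℤ) ∣ ((i c.succ : ℤ) - (m c : ℤ)) then ((q:ℕ):ℂ) else 0 := by
        intro c
        exact orth hr hτ _
      rw [Finset.prod_congr rfl (fun c _ => e2 c)]
      by_cases hall : ∀ c : Fin k, ((q:ℕ):ℤ) ∣ ((i c.succ : ℤ) - (m c : ℤ))
      · rw [if_pos hall]
        rw [Finset.prod_congr rfl (fun c _ => if_pos (hall c))]
        simp
      · rw [if_neg hall]
        push_neg at hall
        obtain ⟨c0, hc0⟩ := hall
        apply Finset.prod_eq_zero (Finset.mem_univ c0)
        rw [if_neg hc0]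
    rw [step1]
    rw [Finset.sum_congr rfl (fun i _ => by rw [step2 i])]
    rw [Finset.mul_sum, Finset.sum_filter]
    apply Finset.sum_congr rfl
    intro i _
    by_cases h : ∀ c : Fin k, ((q:ℕ):ℤ) ∣ ((i c.succ : ℤ) - (m c : ℤ))
    · rw [if_pos h, if_pos h, MvPolynomial.smul_eq_C_mul]
    · rw [if_neg h, if_neg h, zero_smul]
  have hqc : (((q:ℕ):ℂ))^k ≠ 0 := pow_ne_zero _ (Nat.cast_ne_zero.mpr (by omega))
  have : (∑ i ∈ A.filter (fun i => ∀ c : Fin k, ((q:ℕ):ℤ) ∣ ((i c.succ : ℤ) - (m c : ℤ))), mono i)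
      = C ((((q:ℕ):ℂ))^k)⁻¹ * T := by
    rw [hTeq, ← mul_assoc, ← C_mul, inv_mul_cancel₀ hqc, C_1, one_mul]
  rw [this]
  exact Ideal.mul_mem_left _ _ hTJ

noncomputable section
open Multiset in
/-- multiset of a tuple -/
def msOf {n : ℕ} (f : Fin n → ℕ) : Multiset ℕ := Multiset.map f Finset.univ.val

def prodX (s : Multiset ℕ) : MvPolynomial ℕ ℂ := (s.map X).prod
def SOS (s : Multiset ℕ) : ℕ := (s.map (·^2)).sum

lemma sum_msOf {n : ℕ} (f : Fin n → ℕ) : (msOf f).sum = ∑ c, f c := rfl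

lemma card_msOf {n : ℕ} (f : Fin n → ℕ) : Multiset.card (msOf f) = n := by
  simp [msOf]

lemma SOS_msOf {n : ℕ} (f : Fin n → ℕ) : SOS (msOf f) = ∑ c, (f c)^2 := by
  simp only [SOS, msOf, Multiset.map_map]
  rfl

lemma prodX_msOf {n : ℕ} (f : Fin n → ℕ) : prodX (msOf f) = ∏ c, X (f c) := by
  simp only [prodX, msOf, Multiset.map_map]
  rfl

lemma mem_msOf {n : ℕ} (f : Fin n → ℕ) (c : Fin n) : f c ∈ msOf f :=
  Multiset.mem_map.mpr ⟨c, by simp, rfl⟩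

lemma msOf_get (l : List ℕ) : msOf l.get = (l : Multiset ℕ) := by
  rw [msOf, Fin.univ_def]
  show Multiset.map l.get ↑(List.finRange l.length) = _
  rw [Multiset.map_coe, List.map_get_finRange]

lemma msOf_comp_cast {n m : ℕ} (h : n = m) (f : Fin m → ℕ) :
    msOf (f ∘ (finCongr h)) = msOf f := by
  subst h
  simp [msOf]

lemma key_lemma (k r : ℕ) (τ : ℂ) (hr : 2 ≤ r) (hτ : IsPrimitiveRoot τ (r-1))
    (t : Multiset ℕ) (htc : Multiset.card t = k+1)
    (hw : ∀ x ∈ t, ∀ y ∈ t, x ≤ y + (r-1)) :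
    (Ideal.Quotient.mk (JbarIdeal k τ)) (prodX t) ∈ Submodule.span ℂ
      {z : MvPolynomial ℕ ℂ ⧸ JbarIdeal k τ | ∃ t' : Multiset ℕ,
        Multiset.card t' = k+1 ∧ t'.sum = t.sum ∧ SOS t < SOS t' ∧
        z = Ideal.Quotient.mk (JbarIdeal k τ) (prodX t')} := by
  classical
  have hq : 1 ≤ r - 1 := by omega
  set q : ℕ := r - 1 with hqdef
  set l : List ℕ := t.toList with hl
  have hlen : k + 1 = l.length := by
    rw [hl, Multiset.length_toList, htc]
  set i₀ : Fin (k+1) → ℕ := l.get ∘ (finCongr hlen) with hi₀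
  have hms₀ : msOf i₀ = t := by
    rw [hi₀, msOf_comp_cast hlen, msOf_get, hl, Multiset.coe_toList]
  set d : ℕ := t.sum with hd
  have hsum₀ : ∑ c, i₀ c = d := by rw [← sum_msOf, hms₀]
  set m : Fin k → ℕ := fun c => i₀ c.succ with hm
  set A := Finset.Nat.antidiagonalTuple (k+1) d with hA
  set F := A.filter (fun i => ∀ c : Fin k, ((q:ℕ):ℤ) ∣ ((i c.succ : ℤ) - (m c : ℤ))) with hF
  set mono : (Fin (k+1) → ℕ) → MvPolynomial ℕ ℂ := fun i => ∏ c : Fin (k+1), X (i c) with hmono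
  have hGJ : (∑ i ∈ F, mono i) ∈ JbarIdeal k τ := avg_mem k r τ hr hτ d m
  set π := Ideal.Quotient.mk (JbarIdeal k τ) with hπ
  -- split F
  set F₁ := F.filter (fun i => msOf i = t) with hF₁
  set F₂ := F.filter (fun i => ¬ (msOf i = t)) with hF₂
  have hsplit : ∑ i ∈ F₁, π (mono i) + ∑ i ∈ F₂, π (mono i) = 0 := by
    rw [Finset.sum_filter_add_sum_filter_not F _ (fun i => π (mono i))]
    rw [← map_sum]
    rw [Ideal.Quotient.eq_zero_iff_mem]
    exact hGJ
  have hmono_eq : ∀ i ∈ F₁, π (mono i) = π (prodX t) := by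
    intro i hi
    have : msOf i = t := (Finset.mem_filter.mp hi).2
    rw [← this, prodX_msOf]
  have hi₀F : i₀ ∈ F₁ := by
    rw [hF₁, Finset.mem_filter]
    refine ⟨?_, hms₀⟩
    rw [hF, Finset.mem_filter]
    constructor
    · rw [hA, Finset.Nat.mem_antidiagonalTuple]
      exact hsum₀
    · intro c
      simp [hm]
  have hN : 0 < F₁.card := Finset.card_pos.mpr ⟨i₀, hi₀F⟩
  have hsum1 : ∑ i ∈ F₁, π (mono i) = (F₁.card : ℂ) • π (prodX t) := by
    rw [Finset.sum_congr rfl hmono_eq, Finset.sum_const, Nat.cast_smul_eq_nsmul]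
  have hkey : π (prodX t) = ∑ i ∈ F₂, (-(F₁.card : ℂ)⁻¹) • π (mono i) := by
    have hc : (F₁.card : ℂ) ≠ 0 := Nat.cast_ne_zero.mpr (by omega)
    rw [hsum1] at hsplit
    have : π (prodX t) = (F₁.card : ℂ)⁻¹ • ((F₁.card : ℂ) • π (prodX t)) := by
      rw [smul_smul, inv_mul_cancel₀ hc, one_smul]
    rw [this]
    have h2 : (F₁.card : ℂ) • π (prodX t) = - ∑ i ∈ F₂, π (mono i) := by
      linear_combination (norm := module) hsplit
    rw [h2, ← Finset.sum_neg_distrib, Finset.smul_sum]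
    apply Finset.sum_congr rfl
    intro i _
    rw [smul_neg, neg_smul]
  rw [hkey]
  apply Submodule.sum_mem
  intro i hi
  apply Submodule.smul_mem
  apply Submodule.subset_span
  -- show π (mono i) is in the set
  have hi2 : i ∈ F.filter (fun i => ¬ (msOf i = t)) := hi
  have hiF : i ∈ F := (Finset.mem_filter.mp hi2).1
  have hine : msOf i ≠ t := (Finset.mem_filter.mp hi2).2
  have hiA : ∑ c, i c = d := Finset.Nat.mem_antidiagonalTuple.mp ((Finset.mem_filter.mp hiF).1)
  have hidvd : ∀ c : Fin k, ((q:ℕ):ℤ) ∣ ((i c.succ : ℤ) - (m c : ℤ)) := (Finset.mem_filter.mp hiF).2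
  refine ⟨msOf i, card_msOf i, by rw [sum_msOf, hiA, hd], ?_, by rw [prodX_msOf]⟩
  -- SOS t < SOS (msOf i) via core_sq
  have hdvd : ∀ c : Fin (k+1), ((q:ℕ):ℤ) ∣ ((i c : ℤ) - (i₀ c : ℤ)) := by
    intro c
    induction c using Fin.cases with
    | zero =>
      have hz : ∑ c : Fin (k+1), ((i c : ℤ) - (i₀ c : ℤ)) = 0 := by
        rw [Finset.sum_sub_distrib]
        have e1 : ∑ c : Fin (k+1), ((i c : ℤ)) = (d : ℤ) := by
          rw [← hiA]; push_cast; rfl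
        have e2 : ∑ c : Fin (k+1), ((i₀ c : ℤ)) = (d : ℤ) := by
          rw [← hsum₀]; push_cast; rfl
        rw [e1, e2, sub_self]
      rw [Fin.sum_univ_succ] at hz
      have hrest : ((q:ℕ):ℤ) ∣ ∑ c : Fin k, ((i c.succ : ℤ) - (i₀ c.succ : ℤ)) := by
        apply Finset.dvd_sum
        intro c _
        exact hidvd c
      have : ((i 0 : ℤ) - (i₀ 0 : ℤ)) = - ∑ c : Fin k, ((i c.succ : ℤ) - (i₀ c.succ : ℤ)) := by
        linarith [hz]
      rw [this]
      exact Dvd.dvd.neg_right hrest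
    | succ c => exact hidvd c
  have hwidth : ∀ c c' : Fin (k+1), (i₀ c : ℤ) ≤ (i₀ c' : ℤ) + ((q:ℕ):ℤ) := by
    intro c c'
    have h1 := hw (i₀ c) (hms₀ ▸ mem_msOf i₀ c) (i₀ c') (hms₀ ▸ mem_msOf i₀ c')
    push_cast
    exact_mod_cast h1
  have hne : Multiset.map (fun c => ((i₀ c : ℤ))) Finset.univ.val
      ≠ Multiset.map (fun c => ((i c : ℤ))) Finset.univ.val := by
    intro hcon
    apply hine
    apply Multiset.map_injective (fun a b => by exact_mod_cast id : Function.Injective (Nat.cast : ℕ → ℤ))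
    show Multiset.map _ (msOf i) = Multiset.map _ t
    rw [← hms₀]
    simp only [msOf, Multiset.map_map]
    exact hcon.symm
  have hcore := core_sq ((q:ℕ):ℤ) (by exact_mod_cast hq)
    (∑ c, ((i c : ℤ) - (i₀ c : ℤ)).natAbs) (fun c => (i₀ c : ℤ)) (fun c => (i c : ℤ))
    le_rfl hdvd ?_ hwidth hne
  · have e1 : (SOS t : ℤ) = ∑ c, ((i₀ c : ℤ))^2 := by
      rw [← hms₀, SOS_msOf]; push_cast; rfl
    have e2 : (SOS (msOf i) : ℤ) = ∑ c, ((i c : ℤ))^2 := by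
      rw [SOS_msOf]; push_cast; rfl
    have : (SOS t : ℤ) < (SOS (msOf i) : ℤ) := by rw [e1, e2]; exact hcore
    exact_mod_cast this
  · have e1 : ∑ c : Fin (k+1), ((i c : ℤ)) = (d : ℤ) := by
      rw [← hiA]; push_cast; rfl
    have e2 : ∑ c : Fin (k+1), ((i₀ c : ℤ)) = (d : ℤ) := by
      rw [← hsum₀]; push_cast; rfl
    rw [e1, e2]
end


open MvPolynomial Finset

lemma prodX_add (s u : Multiset ℕ) : prodX (s + u) = prodX s * prodX u := by
  rw [prodX, prodX, prodX, Multiset.map_add, Multiset.prod_add]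

lemma SOS_add (s u : Multiset ℕ) : SOS (s + u) = SOS s + SOS u := by
  rw [SOS, SOS, SOS, Multiset.map_add, Multiset.sum_add]

lemma SOS_le (s : Multiset ℕ) : SOS s ≤ s.sum * s.sum := by
  induction s using Multiset.induction with
  | empty => simp [SOS]
  | cons a s ih =>
    rw [show a ::ₘ s = ({a} : Multiset ℕ) + s by simp, SOS_add, Multiset.sum_add]
    have h1 : SOS {a} = a * a := by simp [SOS]; ring
    rw [h1]
    have h2 : Multiset.sum {a} = a := by simp
    rw [h2]
    nlinarith [Nat.zero_le (s.sum), Nat.zero_le a]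

lemma prodX_toMultiset (v : ℕ →₀ ℕ) : prodX v.toMultiset = v.prod fun n e => X n ^ e := by
  induction v using Finsupp.induction with
  | zero => simp [prodX]
  | single_add i n f hif hn ih =>
    rw [Finsupp.toMultiset_add, prodX_add, ih, Finsupp.toMultiset_single]
    rw [Finsupp.prod_add_index' (fun a => pow_zero _) (fun a b₁ b₂ => pow_add _ _ _)]
    congr 1
    rw [prodX, Multiset.nsmul_singleton, Multiset.map_replicate, Multiset.prod_replicate]
    exact (Finsupp.prod_single_index (h := fun a e => (X a : MvPolynomial ℕ ℂ) ^ e) (pow_zero (X i))).symm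

lemma span_prodX_top :
    Submodule.span ℂ {p : MvPolynomial ℕ ℂ | ∃ s : Multiset ℕ, p = prodX s} = ⊤ := by
  rw [eq_top_iff]
  rintro p -
  rw [MvPolynomial.as_sum p]
  apply Submodule.sum_mem
  intro v _
  have h1 : (monomial v) (coeff v p) = (coeff v p) • (monomial v 1) := by
    rw [MvPolynomial.smul_monomial, smul_eq_mul, mul_one]
  rw [h1]
  apply Submodule.smul_mem
  apply Submodule.subset_span
  refine ⟨v.toMultiset, ?_⟩
  rw [prodX_toMultiset, MvPolynomial.monomial_eq, C_1, one_mul]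

lemma sorted_ge_getElem {l : List ℕ} (hl : List.Pairwise (· ≥ ·) l) {a b : ℕ}
    (hab : a ≤ b) (hb : b < l.length) : l[b] ≤ l[a] := by
  rcases Nat.lt_or_ge a b with h | h
  · have := List.pairwise_iff_get.mp hl ⟨a, by omega⟩ ⟨b, hb⟩ (by exact h)
    simpa [List.get_eq_getElem] using this
  · have : a = b := by omega
    subst this
    exact le_refl _

lemma main_claim (k r : ℕ) (τ : ℂ) (hr : 2 ≤ r) (hτ : IsPrimitiveRoot τ (r-1)) :
    ∀ (N : ℕ) (s : Multiset ℕ), s.sum * s.sum + 1 - SOS s ≤ N →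
    (Ideal.Quotient.mk (JbarIdeal k τ)) (prodX s) ∈ Submodule.span ℂ
      {x : MvPolynomial ℕ ℂ ⧸ JbarIdeal k τ | ∃ (n : ℕ) (lam : Fin n → ℕ),
        Antitone lam ∧
        (∀ i : Fin n, ∀ h : (i : ℕ) + k < n, lam ⟨(i : ℕ) + k, h⟩ + r ≤ lam i) ∧
        x = Ideal.Quotient.mk (JbarIdeal k τ) (∏ i : Fin n, MvPolynomial.X (lam i))} := by
  classical
  intro N
  induction N with
  | zero =>
    intro s hs
    exfalso
    have := SOS_le s
    omega
  | succ N ih =>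
    intro s hs
    set l : List ℕ := s.sort (· ≥ ·) with hldef
    have hsort : List.Pairwise (· ≥ ·) l := Multiset.pairwise_sort s _
    have hcoe : (l : Multiset ℕ) = s := Multiset.sort_eq s _
    by_cases hadm : ∀ (a : ℕ) (h : a + k < l.length),
        l[a + k] + r ≤ l[a]'(by omega)
    · -- admissible
      apply Submodule.subset_span
      refine ⟨l.length, fun i => l[(i : ℕ)], ?_, ?_, ?_⟩
      · intro i j hij
        exact sorted_ge_getElem hsort hij j.isLt
      · intro i h
        exact hadm i h
      · have h1 : ∏ i : Fin l.length, X (l[(i : ℕ)]) = prodX s := by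
          rw [prodX]; conv_rhs => rw [← hcoe]
          rw [Multiset.map_coe, Multiset.prod_coe]
          conv_rhs => rw [← List.ofFn_get l]
          rw [List.map_ofFn, List.prod_ofFn]
          rfl
        rw [h1]
    · push_neg at hadm
      obtain ⟨a, hak, hbad⟩ := hadm
      -- cluster
      set t₀l : List ℕ := (l.drop a).take (k+1) with ht₀l
      have hlent : t₀l.length = k + 1 := by
        rw [ht₀l, List.length_take, List.length_drop]
        omega
      set t₀ : Multiset ℕ := (t₀l : Multiset ℕ) with ht₀
      set ul : Multiset ℕ := ((l.take a : List ℕ) : Multiset ℕ) + (((l.drop a).drop (k+1) : List ℕ) : Multiset ℕ) with hul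
      have hsplit : s = t₀ + ul := by
        have h2 : l = l.take a ++ (t₀l ++ (l.drop a).drop (k+1)) := by
          rw [ht₀l, List.take_append_drop, List.take_append_drop]
        rw [ht₀, hul, ← hcoe]
        conv_lhs => rw [h2]
        simp only [← Multiset.coe_add]
        rw [add_left_comm]
      have hmem_t₀ : ∀ x ∈ t₀, ∃ j, j ≤ k ∧ ∃ (hj : a + j < l.length), x = l[a + j] := by
        intro x hx
        rw [ht₀, Multiset.mem_coe, List.mem_iff_getElem] at hx
        obtain ⟨j, hjlen, hjx⟩ := hx
        have hj1 : j < k + 1 := by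
          have := hjlen; rw [hlent] at this; exact this
        refine ⟨j, by omega, by
          rw [ht₀l] at hjlen
          simp only [List.length_take, List.length_drop] at hjlen
          omega, ?_⟩
        subst hjx
        simp only [ht₀l, List.getElem_take, List.getElem_drop]
      have hwidth : ∀ x ∈ t₀, ∀ y ∈ t₀, x ≤ y + (r-1) := by
        intro x hx y hy
        obtain ⟨jx, hjxk, hjx, hx'⟩ := hmem_t₀ x hx
        obtain ⟨jy, hjyk, hjy, hy'⟩ := hmem_t₀ y hy
        have h1 : x ≤ l[a]'(by omega) := by
          rw [hx']; exact sorted_ge_getElem hsort (by omega) hjx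
        have h2 : l[a+k] ≤ y := by
          rw [hy']; exact sorted_ge_getElem hsort (by omega) (by omega)
        omega
      have hcard : Multiset.card t₀ = k + 1 := by
        rw [ht₀, Multiset.coe_card, hlent]
      have hkey := key_lemma k r τ hr hτ t₀ hcard hwidth
      -- multiply by prodX ul
      set π := Ideal.Quotient.mk (JbarIdeal k τ) with hπ
      set L := LinearMap.mulLeft ℂ (π (prodX ul)) with hL
      have hmap := Submodule.map_span L {z : MvPolynomial ℕ ℂ ⧸ JbarIdeal k τ | ∃ t' : Multiset ℕ,
        Multiset.card t' = k+1 ∧ t'.sum = t₀.sum ∧ SOS t₀ < SOS t' ∧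
        z = π (prodX t')}
      have hin : L (π (prodX t₀)) ∈ Submodule.map L (Submodule.span ℂ {z : MvPolynomial ℕ ℂ ⧸ JbarIdeal k τ | ∃ t' : Multiset ℕ,
        Multiset.card t' = k+1 ∧ t'.sum = t₀.sum ∧ SOS t₀ < SOS t' ∧
        z = π (prodX t')}) := Submodule.mem_map_of_mem hkey
      rw [hmap] at hin
      have heq : L (π (prodX t₀)) = π (prodX s) := by
        rw [hL, LinearMap.mulLeft_apply, ← map_mul, ← prodX_add,
          show ul + t₀ = t₀ + ul from add_comm _ _, ← hsplit]
      rw [heq] at hin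
      -- now show span (L '' set) ≤ span adm
      refine Submodule.span_le.mpr ?_ hin
      rintro z ⟨w, ⟨t', hct', hst', hSOS', hw⟩, rfl⟩
      show L w ∈ _
      have hLw : L w = π (prodX (t' + ul)) := by
        rw [hw, hL, LinearMap.mulLeft_apply, ← map_mul, ← prodX_add,
          show ul + t' = t' + ul from add_comm _ _]
      rw [hLw]
      apply ih
      -- measure decreases
      have e1 : (t' + ul).sum = s.sum := by
        simp only [hsplit, Multiset.sum_add, hst']
      have e2 : SOS s < SOS (t' + ul) := by
        simp only [hsplit, SOS_add]
        omega
      have e3 : SOS (t' + ul) ≤ s.sum * s.sum := by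
        rw [← e1]; exact SOS_le _
      rw [e1]
      have h4 := SOS_le s
      have : s.sum * s.sum + 1 - SOS (t' + ul) < s.sum * s.sum + 1 - SOS s := by
        apply Nat.sub_lt_sub_left (by omega) e2
      omega

/-- the residue classes of the monomials `e_λ = e_{λ_1}⋯e_{λ_n}`,
for `λ` ranging over all (k,r,n)-admissible partitions over all `n ≥ 0`, span
the quotient `R̄/J̄` as a ℂ-vector space. -/
theorem stmt6 (k r : ℕ) (hk : 1 ≤ k) (hr : 2 ≤ r) (τ : ℂ)
    (hτ : IsPrimitiveRoot τ (r - 1)) :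
    Submodule.span ℂ
      {x : MvPolynomial ℕ ℂ ⧸ JbarIdeal k τ | ∃ (n : ℕ) (lam : Fin n → ℕ),
        Antitone lam ∧
        (∀ i : Fin n, ∀ h : (i : ℕ) + k < n, lam ⟨(i : ℕ) + k, h⟩ + r ≤ lam i) ∧
        x = Ideal.Quotient.mk (JbarIdeal k τ) (∏ i : Fin n, MvPolynomial.X (lam i))} = ⊤ := by
  classical
  rw [eq_top_iff]
  rintro x -
  set f := (Ideal.Quotient.mkₐ ℂ (JbarIdeal k τ)).toLinearMap with hf
  have htop : Submodule.span ℂ (⇑f '' {p : MvPolynomial ℕ ℂ | ∃ s : Multiset ℕ, p = prodX s}) = ⊤ := by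
    rw [← Submodule.map_span, span_prodX_top, Submodule.map_top, LinearMap.range_eq_top]
    intro y
    obtain ⟨p, hp⟩ := Ideal.Quotient.mk_surjective (I := JbarIdeal k τ) y
    exact ⟨p, by simpa [hf, Ideal.Quotient.mkₐ_eq_mk] using hp⟩
  have hx : x ∈ Submodule.span ℂ (⇑f '' {p : MvPolynomial ℕ ℂ | ∃ s : Multiset ℕ, p = prodX s}) := by
    rw [htop]; exact Submodule.mem_top
  refine Submodule.span_le.mpr ?_ hx
  rintro z ⟨p, ⟨s, rfl⟩, rfl⟩
  have hm := main_claim k r τ hr hτ (s.sum * s.sum + 1 - SOS s) s le_rfl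
  show f (prodX s) ∈ _
  have hfe : f (prodX s) = Ideal.Quotient.mk (JbarIdeal k τ) (prodX s) := by
    simp [hf, Ideal.Quotient.mkₐ_eq_mk]
  rw [hfe]
  exact hm
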